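/- For Hermitian matrices A and B on a finite-dimensional Hilbert space and L > 0, the Trotter error satisfies ‖e^{-i(A+B)L} - (e^{-iAL/N} e^{-iBL/N})^N‖ ≤ (L²/(2N)) ‖[A,B]‖ for all N ∈ ℤ⁺; in particular the error is O(L²/N) as N → ∞. -/

import Mathlib

set_option maxHeartbeats 800000
open scoped Matrix.Norms.L2Operator
open Matrix NormedSpace

namespace TrotterAux

variable {d : ℕ}

local notation "M" => Matrix (Fin d) (Fin d) ℂ

lemma expR_eq (X : M) : exp X = exp X := rfl

lemma norm_one_le : ‖(1 : M)‖ ≤ 1 := by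
  rw [Matrix.cstar_norm_def, _root_.map_one]; exact ContinuousLinearMap.norm_id_le

lemma exp_neg_mul (X : M) : exp (-X) * exp X = 1 := by
  rw [← Matrix.exp_add_of_commute _ _ (Commute.refl X).neg_left, neg_add_cancel,
    NormedSpace.exp_zero]

lemma exp_mul_neg (X : M) : exp X * exp (-X) = 1 := by
  rw [← Matrix.exp_add_of_commute _ _ (Commute.refl X).neg_right, add_neg_cancel,
    NormedSpace.exp_zero]

lemma exp_mem_unitary {X : M} (h : Xᴴ = -X) : exp X ∈ unitary M := by
  rw [Unitary.mem_iff]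
  constructor
  · rw [Matrix.star_eq_conjTranspose, ← Matrix.exp_conjTranspose, h]; exact exp_neg_mul X
  · rw [Matrix.star_eq_conjTranspose, ← Matrix.exp_conjTranspose, h]; exact exp_mul_neg X

lemma norm_le_one_of_unitary {U : M} (h : U ∈ unitary M) : ‖U‖ ≤ 1 := by
  have h1 : star U * U = 1 := h.1
  have h2 : ‖U‖ * ‖U‖ ≤ 1 := by
    rw [← CStarRing.norm_star_mul_self, h1]; exact norm_one_le
  nlinarith [norm_nonneg U]

lemma norm_exp_le_one {X : M} (h : Xᴴ = -X) : ‖exp X‖ ≤ 1 :=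
  norm_le_one_of_unitary (exp_mem_unitary h)

lemma skew_smul {X : M} (h : Xᴴ = -X) (s : ℝ) : ((s : ℂ) • X)ᴴ = -((s : ℂ) • X) := by
  rw [Matrix.conjTranspose_smul, h, Complex.star_def, Complex.conj_ofReal]; rw [smul_neg]

lemma skew_real_smul {X : M} (h : Xᴴ = -X) (s : ℝ) : (s • X)ᴴ = -(s • X) := by
  have : (s • X) = (s : ℂ) • X := by simp
  rw [this]; exact skew_smul h s

lemma norm_exp_smul_le_one {X : M} (h : Xᴴ = -X) (s : ℝ) : ‖exp (s • X)‖ ≤ 1 :=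
  norm_exp_le_one (skew_real_smul h s)

/-- Commutator bound: `‖X * e^{sY} - e^{sY} * X‖ ≤ s ‖XY - YX‖` for skew `Y`, `s ≥ 0`. -/
lemma comm_exp_bound (X : M) {Y : M} (hY : Yᴴ = -Y) {s : ℝ} (hs : 0 ≤ s) :
    ‖X * exp (s • Y) - exp (s • Y) * X‖ ≤ s * ‖X * Y - Y * X‖ := by
  set f : ℝ → M := fun u => exp (u • Y) * X * exp (u • (-Y)) with hf
  set C : ℝ := ‖X * Y - Y * X‖ with hC
  have hinv : ∀ u : ℝ, exp (u • (-Y)) * exp (u • Y) = 1 := fun u => by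
    rw [expR_eq, expR_eq, smul_neg]; exact exp_neg_mul _
  have hderiv : ∀ u : ℝ, HasDerivAt f
      (exp (u • Y) * (Y * X - X * Y) * exp (u • (-Y))) u := by
    intro u
    have h := ((hasDerivAt_exp_smul_const (𝕂 := ℝ) Y u).mul_const X).mul
      (hasDerivAt_exp_smul_const (𝕂 := ℝ) (-Y) u)
    convert h using 1
    · rfl
    · rfl
    · rfl
    · rfl
    have hc : exp (u • (-Y)) * (-Y) = (-Y) * exp (u • (-Y)) :=
      (((Commute.refl (-Y)).smul_left u).exp_left).eq
    rw [hc]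
    noncomm_ring
  have hbound : ∀ u : ℝ, ‖exp (u • Y) * (Y * X - X * Y) * exp (u • (-Y))‖ ≤ C := by
    intro u
    have h1 : ‖exp (u • Y)‖ ≤ 1 := by rw [expR_eq]; exact norm_exp_smul_le_one hY u
    have h2 : ‖exp (u • (-Y))‖ ≤ 1 := by
      rw [expR_eq]
      exact norm_exp_smul_le_one (by rw [Matrix.conjTranspose_neg, hY, neg_neg]) u
    have h3 : ‖Y * X - X * Y‖ = C := by rw [hC, ← norm_neg]; congr 1; noncomm_ring
    have e1 := norm_mul_le (exp (u • Y)) (Y * X - X * Y)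
    have e2 := norm_mul_le (exp (u • Y) * (Y * X - X * Y)) (exp (u • (-Y)))
    have n1 := norm_nonneg (exp (u • Y))
    have n2 := norm_nonneg (exp (u • (-Y)))
    have n3 := norm_nonneg (Y * X - X * Y)
    have n4 := norm_nonneg (exp (u • Y) * (Y * X - X * Y))
    nlinarith [h3]
  have hmvt : ‖f s - f 0‖ ≤ C * s := by
    have := (convex_Icc (0:ℝ) s).norm_image_sub_le_of_norm_hasDerivWithin_le
      (f' := fun u => exp (u • Y) * (Y * X - X * Y) * exp (u • (-Y)))
      (fun x _ => (hderiv x).hasDerivWithinAt) (fun x _ => hbound x)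
      (Set.left_mem_Icc.2 hs) (Set.right_mem_Icc.2 hs)
    simpa [abs_of_nonneg hs] using this
  have hf0 : f 0 = X := by
    simp [hf, zero_smul, NormedSpace.exp_zero]
  have hkey : X * exp (s • Y) - exp (s • Y) * X = (f 0 - f s) * exp (s • Y) := by
    rw [hf0, sub_mul, hf]
    simp only
    rw [mul_assoc, mul_assoc, hinv s, mul_one]
  rw [← expR_eq, hkey]
  calc ‖(f 0 - f s) * exp (s • Y)‖ ≤ ‖f 0 - f s‖ * ‖exp (s • Y)‖ := norm_mul_le _ _
    _ ≤ (C * s) * 1 := by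
        have h1 : ‖exp (s • Y)‖ ≤ 1 := by rw [expR_eq]; exact norm_exp_smul_le_one hY s
        rw [norm_sub_rev] at hmvt
        exact mul_le_mul hmvt h1 (norm_nonneg _) (le_trans (norm_nonneg _) hmvt)
    _ = s * C := by ring

/-- Single Trotter step bound. -/
lemma step_bound {X Y : M} (hX : Xᴴ = -X) (hY : Yᴴ = -Y) :
    ‖exp (X + Y) - exp X * exp Y‖ ≤ ‖X * Y - Y * X‖ / 2 := by
  set c : ℝ := ‖X * Y - Y * X‖ with hc
  set G : ℝ → M := fun s => exp (s • (X + Y)) * exp (s • (-Y)) * exp (s • (-X)) with hG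
  set G' : ℝ → M := fun s => exp (s • (X + Y)) *
    (X * exp (s • (-Y)) - exp (s • (-Y)) * X) * exp (s • (-X)) with hG'
  have hderiv : ∀ s : ℝ, HasDerivAt G (G' s) s := by
    intro s
    have h := (((hasDerivAt_exp_smul_const (𝕂 := ℝ) (X + Y) s).mul
      (hasDerivAt_exp_smul_const (𝕂 := ℝ) (-Y) s)).mul
      (hasDerivAt_exp_smul_const (𝕂 := ℝ) (-X) s))
    convert h using 1
    · rfl
    · rfl
    · rfl
    · rfl
    have hc2 : exp (s • (-Y)) * (-Y) = (-Y) * exp (s • (-Y)) :=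
      (((Commute.refl (-Y)).smul_left s).exp_left).eq
    have hc3 : exp (s • (-X)) * (-X) = (-X) * exp (s • (-X)) :=
      (((Commute.refl (-X)).smul_left s).exp_left).eq
    rw [hG', hc2, hc3, Pi.mul_apply]
    noncomm_ring
  have ce : ∀ Z : M, Continuous fun s : ℝ => exp (s • Z) := fun Z =>
    continuous_iff_continuousAt.2 fun s => (hasDerivAt_exp_smul_const (𝕂 := ℝ) Z s).continuousAt
  have hcont : Continuous G' :=
    ((ce _).mul ((continuous_const.mul (ce _)).sub ((ce _).mul continuous_const))).mul (ce _)
  have hXneg : (-X)ᴴ = -(-X) := by rw [Matrix.conjTranspose_neg, hX, neg_neg]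
  have hYneg : (-Y)ᴴ = -(-Y) := by rw [Matrix.conjTranspose_neg, hY, neg_neg]
  have hXYneg : (X + Y)ᴴ = -(X + Y) := by rw [Matrix.conjTranspose_add, hX, hY, neg_add]
  have hbound : ∀ s ∈ Set.Ioc (0:ℝ) 1, ‖G' s‖ ≤ s * c := by
    intro s hs
    have hmid : ‖X * exp (s • (-Y)) - exp (s • (-Y)) * X‖ ≤ s * c := by
      have := comm_exp_bound X hYneg hs.1.le
      rw [← expR_eq] at this
      have heq : ‖X * (-Y) - (-Y) * X‖ = c := by rw [hc, ← norm_neg]; congr 1; noncomm_ring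
      rw [heq] at this
      exact this
    have n1 : ‖exp (s • (X + Y))‖ ≤ 1 := by rw [expR_eq]; exact norm_exp_smul_le_one hXYneg s
    have n3 : ‖exp (s • (-X))‖ ≤ 1 := by rw [expR_eq]; exact norm_exp_smul_le_one hXneg s
    have e1 := norm_mul_le (exp (s • (X + Y)))
      (X * exp (s • (-Y)) - exp (s • (-Y)) * X)
    have e2 := norm_mul_le (exp (s • (X + Y)) *
      (X * exp (s • (-Y)) - exp (s • (-Y)) * X)) (exp (s • (-X)))
    have n4 := norm_nonneg (exp (s • (X + Y)))
    have n5 := norm_nonneg (X * exp (s • (-Y)) - exp (s • (-Y)) * X)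
    have n6 := norm_nonneg (exp (s • (X + Y)) *
      (X * exp (s • (-Y)) - exp (s • (-Y)) * X))
    have n7 := norm_nonneg (exp (s • (-X)))
    rw [hG']
    nlinarith
  have hftc : ∫ s in (0:ℝ)..1, G' s = G 1 - G 0 :=
    intervalIntegral.integral_eq_sub_of_hasDerivAt (fun x _ => hderiv x)
      (hcont.intervalIntegrable 0 1)
  have hnorm : ‖G 1 - G 0‖ ≤ c / 2 := by
    rw [← hftc]
    have hb := intervalIntegral.norm_integral_le_of_norm_le (μ := MeasureTheory.volume)
      (f := G') (g := fun s => s * c) (a := 0) (b := 1) (by norm_num)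
      (by
        filter_upwards with t ht
        exact hbound t ht)
      ((continuous_id.mul continuous_const).intervalIntegrable 0 1)
    have : ∫ s in (0:ℝ)..1, s * c = c / 2 := by
      rw [intervalIntegral.integral_mul_const, integral_id]
      ring
    rw [this] at hb
    calc ‖∫ s in (0:ℝ)..1, G' s‖ ≤ |c / 2| := hb.trans (le_abs_self _)
      _ = c / 2 := abs_of_nonneg (by positivity)
  have hG0 : G 0 = 1 := by simp [hG, zero_smul, NormedSpace.exp_zero]
  have hG1 : G 1 = exp (X + Y) * exp (-Y) * exp (-X) := by
    rw [hG]; simp only [one_smul, expR_eq]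
  have key : exp (X + Y) - exp X * exp Y = (G 1 - G 0) * (exp X * exp Y) := by
    rw [hG1, hG0, sub_mul, one_mul]
    congr 1
    rw [mul_assoc (exp (X + Y) * exp (-Y)), ← mul_assoc (exp (-X)), exp_neg_mul,
      one_mul, mul_assoc, exp_neg_mul, mul_one]
  rw [key]
  have nX : ‖exp X‖ ≤ 1 := norm_exp_le_one hX
  have nY : ‖exp Y‖ ≤ 1 := norm_exp_le_one hY
  have e1 := norm_mul_le (G 1 - G 0) (exp X * exp Y)
  have e2 := norm_mul_le (exp X) (exp Y)
  have n1 := norm_nonneg (G 1 - G 0)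
  have n2 := norm_nonneg (exp X)
  have n3 := norm_nonneg (exp X * exp Y)
  have n8 : ‖exp X * exp Y‖ ≤ 1 := le_trans e2 (by nlinarith)
  have hc0 : (0:ℝ) ≤ c := norm_nonneg _
  nlinarith

lemma norm_pow_le_one {V : M} (hV : ‖V‖ ≤ 1) : ∀ n : ℕ, ‖V ^ n‖ ≤ 1 := by
  intro n
  induction n with
  | zero => rw [pow_zero]; exact norm_one_le
  | succ n ih =>
      rw [pow_succ]
      have := norm_mul_le (V ^ n) V
      nlinarith [norm_nonneg (V ^ n), norm_nonneg V]

lemma telescope {U V : M} (hU : ‖U‖ ≤ 1) (hV : ‖V‖ ≤ 1) (n : ℕ) :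
    ‖U ^ n - V ^ n‖ ≤ n * ‖U - V‖ := by
  induction n with
  | zero => simp
  | succ n ih =>
      have hsplit : U ^ (n + 1) - V ^ (n + 1) = U * (U ^ n - V ^ n) + (U - V) * V ^ n := by
        rw [pow_succ' U n, pow_succ' V n, mul_sub, sub_mul, sub_add_sub_cancel]
      have h1 : ‖U * (U ^ n - V ^ n)‖ ≤ ‖U ^ n - V ^ n‖ := by
        have := norm_mul_le U (U ^ n - V ^ n)
        nlinarith [norm_nonneg (U ^ n - V ^ n), norm_nonneg U]
      have h2 : ‖(U - V) * V ^ n‖ ≤ ‖U - V‖ := by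
        have := norm_mul_le (U - V) (V ^ n)
        nlinarith [norm_nonneg (U - V), norm_nonneg (V ^ n), norm_pow_le_one hV n]
      calc ‖U ^ (n + 1) - V ^ (n + 1)‖
          ≤ ‖U * (U ^ n - V ^ n)‖ + ‖(U - V) * V ^ n‖ := by rw [hsplit]; exact norm_add_le _ _
        _ ≤ ‖U ^ n - V ^ n‖ + ‖U - V‖ := add_le_add h1 h2
        _ ≤ n * ‖U - V‖ + ‖U - V‖ := by gcongr
        _ = (n + 1 : ℕ) * ‖U - V‖ := by push_cast; ring

end TrotterAux

open TrotterAux in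
/-- **Trotter error bound.**
For Hermitian `A, B` and `L > 0`, for every positive `N`,
`‖e^{-i(A+B)L} - (e^{-iAL/N} e^{-iBL/N})^N‖ ≤ (L²/(2N)) ‖[A,B]‖`. -/
theorem trotter_error_bound (d : ℕ) (A B : Matrix (Fin d) (Fin d) ℂ)
    (hA : A.IsHermitian) (hB : B.IsHermitian) (L : ℝ) (hL : 0 < L)
    (N : ℕ) (hN : 0 < N) :
    ‖NormedSpace.exp ((-(Complex.I * (L : ℂ))) • (A + B)) -
        (NormedSpace.exp ((-(Complex.I * ((L / N : ℝ) : ℂ))) • A) *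
         NormedSpace.exp ((-(Complex.I * ((L / N : ℝ) : ℂ))) • B)) ^ N‖ ≤
      L ^ 2 / (2 * N) * ‖A * B - B * A‖ := by
  set t : ℝ := L / N with ht
  have hNR : (0:ℝ) < N := by exact_mod_cast hN
  have ht0 : 0 < t := div_pos hL hNR
  set z : ℂ := -(Complex.I * (t : ℂ)) with hz
  set X : Matrix (Fin d) (Fin d) ℂ := z • A with hXdef
  set Y : Matrix (Fin d) (Fin d) ℂ := z • B with hYdef
  have hstarz : star z = -z := by
    rw [hz, Complex.star_def]
    simp [Complex.conj_ofReal]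
  have skew : ∀ {C : Matrix (Fin d) (Fin d) ℂ}, C.IsHermitian → (z • C)ᴴ = -(z • C) := by
    intro C hC
    rw [Matrix.conjTranspose_smul, hC.eq, hstarz, neg_smul]
  have hXskew : Xᴴ = -X := skew hA
  have hYskew : Yᴴ = -Y := skew hB
  have hXYskew : (X + Y)ᴴ = -(X + Y) := by
    rw [Matrix.conjTranspose_add, hXskew, hYskew, neg_add]
  have hsum : (-(Complex.I * (L : ℂ))) • (A + B) = N • (z • (A + B)) := by
    rw [← Nat.cast_smul_eq_nsmul ℂ N (z • (A + B)), smul_smul]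
    congr 1
    have hNC : (N : ℂ) ≠ 0 := by exact_mod_cast hNR.ne'
    rw [hz, ht]
    push_cast
    field_simp
  have hzAB : z • (A + B) = X + Y := by rw [hXdef, hYdef, smul_add]
  rw [hsum, Matrix.exp_nsmul, hzAB]
  set W : Matrix (Fin d) (Fin d) ℂ := NormedSpace.exp (X + Y) with hW
  set V : Matrix (Fin d) (Fin d) ℂ := NormedSpace.exp X * NormedSpace.exp Y with hV
  have hWle : ‖W‖ ≤ 1 := norm_exp_le_one hXYskew
  have hVle : ‖V‖ ≤ 1 := by
    have e := norm_mul_le (NormedSpace.exp X) (NormedSpace.exp Y)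
    have h1 := norm_exp_le_one hXskew
    have h2 := norm_exp_le_one hYskew
    nlinarith [norm_nonneg (NormedSpace.exp X), norm_nonneg (NormedSpace.exp Y)]
  have hstep : ‖W - V‖ ≤ ‖X * Y - Y * X‖ / 2 := step_bound hXskew hYskew
  have hcomm : X * Y - Y * X = (z * z) • (A * B - B * A) := by
    rw [hXdef, hYdef, smul_mul_smul_comm, smul_mul_smul_comm, ← smul_sub]
  have hnz : ‖z * z‖ = t ^ 2 := by
    rw [norm_mul, hz]
    simp [abs_of_pos ht0]
    ring
  have hcommnorm : ‖X * Y - Y * X‖ = t ^ 2 * ‖A * B - B * A‖ := by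
    rw [hcomm, norm_smul, hnz]
  calc ‖W ^ N - V ^ N‖ ≤ N * ‖W - V‖ := telescope hWle hVle N
    _ ≤ N * (‖X * Y - Y * X‖ / 2) := by gcongr
    _ = N * (t ^ 2 * ‖A * B - B * A‖ / 2) := by rw [hcommnorm]
    _ = L ^ 2 / (2 * N) * ‖A * B - B * A‖ := by
        rw [ht]
        field_simp
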